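/- Let f and g be continuously differentiable and let ȳ ∈ S(x̄). If S is inner semicontinuous at (x̄,ȳ) — i.e., for every sequence x_k → x̄ there exist y_k ∈ S(x_k) with y_k → ȳ — and the LMFCQ holds at (x̄,ȳ), then the lower-level value function φ is Lipschitz continuous on some neighborhood of x̄. -/

import Mathlib

open Topology Filter

/-- `Vec k` is the Euclidean space `ℝ^k`. -/
abbrev Vec (k : ℕ) := Fin k → ℝ

/-- The lower-level optimal value function `φ(x) = inf {f(x,y) : g(x,y) ≤ 0}`,
with values in the extended reals (`+∞` if the lower-level feasible set is empty). -/
noncomputable def phi {n m q : ℕ} (f : Vec n → Vec m → ℝ) (g : Vec n → Vec m → Vec q)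
    (x : Vec n) : EReal :=
  ⨅ y ∈ {y : Vec m | ∀ i, g x y i ≤ 0}, (f x y : EReal)

lemma onesided_mvt {φ φ' : ℝ → ℝ} {t c : ℝ} (ht : 0 ≤ t)
    (hd : ∀ s ∈ Set.Icc (0:ℝ) t, HasDerivAt φ (φ' s) s)
    (hb : ∀ s ∈ Set.Icc (0:ℝ) t, φ' s ≤ -c) :
    φ t ≤ φ 0 - c * t := by
  set u : ℝ → ℝ := fun s => φ s + c * s with hu
  have hdu : ∀ s ∈ Set.Icc (0:ℝ) t, HasDerivAt u (φ' s + c) s := by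
    intro s hs
    have h2 : HasDerivAt (fun s : ℝ => c * s) c s := by
      simpa using (hasDerivAt_id s).const_mul c
    exact (hd s hs).add h2
  have hanti : AntitoneOn u (Set.Icc 0 t) := by
    apply antitoneOn_of_deriv_nonpos (convex_Icc 0 t)
    · exact fun s hs => (hdu s hs).continuousAt.continuousWithinAt
    · intro s hs
      exact (hdu s (interior_subset hs)).differentiableAt.differentiableWithinAt
    · intro s hs
      rw [(hdu s (interior_subset hs)).deriv]
      have := hb s (interior_subset hs)
      linarith
  have := hanti (Set.left_mem_Icc.2 ht) (Set.right_mem_Icc.2 ht) ht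
  simp only [hu, mul_zero, add_zero] at this
  linarith

lemma seq_to_metric {X Y : Type*} [MetricSpace X] [MetricSpace Y] (S : X → Set Y)
    (xb : X) (yb : Y)
    (hisc : ∀ xk : ℕ → X, Tendsto xk atTop (𝓝 xb) →
      ∃ yk : ℕ → Y, (∀ k, yk k ∈ S (xk k)) ∧ Tendsto yk atTop (𝓝 yb)) :
    ∀ ε > 0, ∃ δ > 0, ∀ x, dist x xb < δ → ∃ y ∈ S x, dist y yb < ε := by
  by_contra hcon
  push_neg at hcon
  obtain ⟨ε, hε, h⟩ := hcon
  have hsel : ∀ k : ℕ, ∃ x, dist x xb < 1/(k+1) ∧ ∀ y ∈ S x, ε ≤ dist y yb := by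
    intro k
    obtain ⟨x, hx1, hx2⟩ := h (1/(k+1)) (by positivity)
    exact ⟨x, hx1, fun y hy => hx2 y hy⟩
  choose xk hxk1 hxk2 using hsel
  have hxkt : Tendsto xk atTop (𝓝 xb) := by
    rw [tendsto_iff_dist_tendsto_zero]
    apply squeeze_zero (fun k => dist_nonneg) (fun k => (hxk1 k).le)
    simpa using tendsto_one_div_add_atTop_nhds_zero_nat (𝕜 := ℝ)
  obtain ⟨yk, hyk1, hyk2⟩ := hisc xk hxkt
  obtain ⟨N, hN⟩ := (Metric.tendsto_atTop.1 hyk2) ε hε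
  exact absurd (hxk2 N (yk N) (hyk1 N)) (not_le.2 (hN N le_rfl))

lemma partial_fderiv_eq {n m q : ℕ} (g : Vec n → Vec m → Vec q)
    (hg : ContDiff ℝ 1 (fun pq : Vec n × Vec m => g pq.1 pq.2))
    (x : Vec n) (y : Vec m) (d : Vec m) (i : Fin q) :
    fderiv ℝ (fun y' => g x y' i) y d
      = fderiv ℝ (fun pq : Vec n × Vec m => g pq.1 pq.2) (x, y) (0, d) i := by
  set G := fun pq : Vec n × Vec m => g pq.1 pq.2 with hG
  have hD : HasFDerivAt G (fderiv ℝ G (x, y)) (x, y) :=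
    ((hg.differentiable one_ne_zero) (x, y)).hasFDerivAt
  have h1 : HasFDerivAt (fun y' : Vec m => (x, y'))
      (ContinuousLinearMap.inr ℝ (Vec n) (Vec m)) y := hasFDerivAt_prodMk_right x y
  have hcomp : HasFDerivAt (fun y' : Vec m => G (x, y'))
      ((fderiv ℝ G (x, y)).comp (ContinuousLinearMap.inr ℝ (Vec n) (Vec m))) y := hD.comp y h1
  have hproj : HasFDerivAt (fun y' : Vec m => g x y' i)
      ((ContinuousLinearMap.proj i).comp
        ((fderiv ℝ G (x, y)).comp (ContinuousLinearMap.inr ℝ (Vec n) (Vec m)))) y := by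
    have h2 := (ContinuousLinearMap.proj (R := ℝ) (φ := fun _ : Fin q => ℝ) i).hasFDerivAt
      (x := G (x, y))
    exact h2.comp y hcomp
  rw [hproj.fderiv]
  simp

lemma curve_hasDerivAt {n m q : ℕ} (g : Vec n → Vec m → Vec q)
    (hg : ContDiff ℝ 1 (fun pq : Vec n × Vec m => g pq.1 pq.2))
    (x : Vec n) (y d : Vec m) (i : Fin q) (s : ℝ) :
    HasDerivAt (fun s' : ℝ => g x (y + s' • d) i)
      (fderiv ℝ (fun pq : Vec n × Vec m => g pq.1 pq.2) (x, y + s • d) (0, d) i) s := by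
  set G := fun pq : Vec n × Vec m => g pq.1 pq.2 with hG
  have h1 : HasDerivAt (fun s' : ℝ => y + s' • d) d s := by
    simpa using ((hasDerivAt_id s).smul_const d).const_add y
  have hγ : HasDerivAt (fun s' : ℝ => ((x, y + s' • d) : Vec n × Vec m)) ((0 : Vec n), d) s :=
    (hasDerivAt_const s x).prodMk h1
  have hD : HasFDerivAt G (fderiv ℝ G (x, y + s • d)) (x, y + s • d) :=
    ((hg.differentiable one_ne_zero) _).hasFDerivAt
  have h2 : HasDerivAt (fun s' : ℝ => G (x, y + s' • d))
      (fderiv ℝ G (x, y + s • d) (0, d)) s := hD.comp_hasDerivAt_of_eq s hγ rfl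
  have h3 := (ContinuousLinearMap.proj (R := ℝ) (φ := fun _ : Fin q => ℝ) i).hasFDerivAt
    (x := G (x, y + s • d))
  exact h3.comp_hasDerivAt s h2

set_option maxHeartbeats 2000000 in
/-- If the lower-level solution map `S` is inner semicontinuous at
`(x̄, ȳ)` and the LMFCQ holds there, then the value function `φ` is Lipschitz
continuous on some neighborhood of `x̄`. -/
theorem stmt_8
    {n m q : ℕ} (hn : 0 < n) (hm : 0 < m) (hq : 0 < q)
    (f : Vec n → Vec m → ℝ) (g : Vec n → Vec m → Vec q)
    -- f and g are continuously differentiable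
    (hf : ContDiff ℝ 1 (fun pq : Vec n × Vec m => f pq.1 pq.2))
    (hg : ContDiff ℝ 1 (fun pq : Vec n × Vec m => g pq.1 pq.2))
    (xb : Vec n) (yb : Vec m)
    -- yb ∈ S(xb)
    (hyb : (∀ i, g xb yb i ≤ 0) ∧ ∀ y', (∀ i, g xb y' i ≤ 0) → f xb yb ≤ f xb y')
    -- S is inner semicontinuous at (xb, yb)
    (hisc : ∀ xk : ℕ → Vec n, Tendsto xk atTop (𝓝 xb) →
      ∃ yk : ℕ → Vec m,
        (∀ k, (∀ i, g (xk k) (yk k) i ≤ 0) ∧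
          ∀ y', (∀ i, g (xk k) y' i ≤ 0) → f (xk k) (yk k) ≤ f (xk k) y') ∧
        Tendsto yk atTop (𝓝 yb))
    -- LMFCQ holds at (xb, yb)
    (hLMFCQ : ∃ d : Vec m, ∀ i, g xb yb i = 0 →
      fderiv ℝ (fun y => g xb y i) yb d < 0) :
    -- φ is Lipschitz continuous on some neighborhood of xb
    ∃ (K : NNReal) (U : Set (Vec n)) (ψ : Vec n → ℝ), U ∈ 𝓝 xb ∧
      LipschitzOnWith K ψ U ∧ ∀ x ∈ U, (ψ x : EReal) = phi f g x := by
  classical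
  obtain ⟨d, hd⟩ := hLMFCQ
  set G := fun pq : Vec n × Vec m => g pq.1 pq.2 with hGdef
  set F := fun pq : Vec n × Vec m => f pq.1 pq.2 with hFdef
  set P : Vec n × Vec m → Vec q := fun p => fderiv ℝ G p (0, d) with hPdef
  have hPc : ∀ i, Continuous fun p => P p i := by
    intro i
    have h1 : Continuous fun p => fderiv ℝ G p := hg.continuous_fderiv one_ne_zero
    exact (continuous_apply i).comp (h1.clm_apply continuous_const)
  have hdP : ∀ i, g xb yb i = 0 → P (xb, yb) i < 0 := by
    intro i hi
    have := hd i hi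
    rwa [partial_fderiv_eq g hg xb yb d i] at this
  -- positive margin c
  haveI : Nonempty (Fin q) := ⟨⟨0, hq⟩⟩
  set r : Fin q → ℝ := fun i => if g xb yb i = 0 then -P (xb, yb) i else -g xb yb i with hrdef
  have hrpos : ∀ i, 0 < r i := by
    intro i
    by_cases hi : g xb yb i = 0
    · simp only [hrdef, if_pos hi]
      linarith [hdP i hi]
    · simp only [hrdef, if_neg hi]
      have := hyb.1 i
      have : g xb yb i < 0 := lt_of_le_of_ne this hi
      linarith
  set c : ℝ := Finset.univ.inf' Finset.univ_nonempty r with hcdef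
  have hc : 0 < c := by
    rw [hcdef, Finset.lt_inf'_iff]
    exact fun i _ => hrpos i
  have hcle : ∀ i, c ≤ r i := fun i => Finset.inf'_le r (Finset.mem_univ i)
  -- neighborhood where margins persist
  have hN : ∀ᶠ p in 𝓝 (xb, yb), ∀ i : Fin q,
      (g xb yb i = 0 → P p i < -c/2) ∧ (g xb yb i ≠ 0 → G p i < -c/2) := by
    rw [eventually_all]
    intro i
    by_cases hi : g xb yb i = 0
    · have h1 : P (xb, yb) i < -c/2 := by
        have := hcle i
        simp only [hrdef, if_pos hi] at this
        linarith
      have h2 : ∀ᶠ p in 𝓝 (xb, yb), P p i < -c/2 :=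
        (hPc i).continuousAt.eventually_lt continuousAt_const h1
      filter_upwards [h2] with p hp
      exact ⟨fun _ => hp, fun h => absurd hi h⟩
    · have h1 : G (xb, yb) i < -c/2 := by
        have := hcle i
        simp only [hrdef, if_neg hi] at this
        have : g xb yb i ≤ -c := by linarith
        simp only [hGdef]
        linarith
      have hGc : Continuous fun p => G p i :=
        (continuous_apply i).comp (hg.continuous)
      have h2 : ∀ᶠ p in 𝓝 (xb, yb), G p i < -c/2 :=
        hGc.continuousAt.eventually_lt continuousAt_const h1
      filter_upwards [h2] with p hp
      exact ⟨fun h => absurd h hi, fun _ => hp⟩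
  -- local Lipschitz constants
  obtain ⟨Lg, Tg, hTg, hGlip⟩ := (hg.contDiffAt (x := (xb, yb))).exists_lipschitzOnWith
  obtain ⟨Lf, Tf, hTf, hFlip⟩ := (hf.contDiffAt (x := (xb, yb))).exists_lipschitzOnWith
  have hnhds : (Tg ∩ Tf ∩ {p | ∀ i : Fin q,
      (g xb yb i = 0 → P p i < -c/2) ∧ (g xb yb i ≠ 0 → G p i < -c/2)}) ∈ 𝓝 (xb, yb) :=
    Filter.inter_mem (Filter.inter_mem hTg hTf) hN
  obtain ⟨ρ, hρ, hball⟩ := Metric.mem_nhds_iff.1 hnhds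
  have hmemball : ∀ (x : Vec n) (y : Vec m), dist x xb < ρ → dist y yb < ρ →
      ((x, y) : Vec n × Vec m) ∈ Metric.ball (xb, yb) ρ := by
    intro x y h1 h2
    rw [Metric.mem_ball, Prod.dist_eq]
    exact max_lt h1 h2
  set K : ℝ := 2 * (Lg : ℝ) / c with hKdef
  have hK0 : 0 ≤ K := by positivity
  have hdn0 : (0:ℝ) ≤ ‖d‖ := norm_nonneg d
  -- metric inner semicontinuity
  set Sset : Vec n → Set (Vec m) := fun x => {y | (∀ i, g x y i ≤ 0) ∧
    ∀ y', (∀ i, g x y' i ≤ 0) → f x y ≤ f x y'} with hSdef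
  have hmet := seq_to_metric Sset xb yb (by
    intro xk hxk
    obtain ⟨yk, h1, h2⟩ := hisc xk hxk
    exact ⟨yk, fun k => h1 k, h2⟩)
  obtain ⟨δ₁, hδ₁, hsel⟩ := hmet (ρ/2) (by positivity)
  set δ₂ : ℝ := min δ₁ (min ρ (ρ / (4 * (K * ‖d‖ + 1)))) with hδ₂def
  have hδ₂ : 0 < δ₂ := by
    apply lt_min hδ₁
    apply lt_min hρ
    positivity
  have hδ₂ρ : δ₂ ≤ ρ / (4 * (K * ‖d‖ + 1)) := le_trans (min_le_right _ _) (min_le_right _ _)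
  -- segment stays in the good ball
  have hseg : ∀ (x₁ x₂ : Vec n) (y₂ : Vec m), dist x₁ xb < δ₂ → dist x₂ xb < δ₂ →
      dist y₂ yb < ρ/2 → ∀ s ∈ Set.Icc 0 (K * dist x₁ x₂),
      ((x₁, y₂ + s • d) : Vec n × Vec m) ∈ Metric.ball (xb, yb) ρ := by
    intro x₁ x₂ y₂ h1 h2 h3 s hs
    apply hmemball
    · exact lt_of_lt_of_le h1 (le_trans (min_le_right _ _) (min_le_left _ _) |>.trans le_rfl)
    · have hs0 : 0 ≤ s := hs.1
      have hsle : s ≤ K * dist x₁ x₂ := hs.2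
      have hdist : dist x₁ x₂ ≤ 2 * δ₂ := by
        calc dist x₁ x₂ ≤ dist x₁ xb + dist xb x₂ := dist_triangle _ _ _
        _ ≤ 2 * δ₂ := by rw [dist_comm xb x₂]; linarith
      have hnorm : ‖s • d‖ = s * ‖d‖ := by
        rw [norm_smul, Real.norm_eq_abs, abs_of_nonneg hs0]
      have hsb : s * ‖d‖ ≤ ρ/2 := by
        have h4 : s * ‖d‖ ≤ K * ‖d‖ * (2 * δ₂) := by
          have hh1 := mul_le_mul_of_nonneg_right hsle hdn0
          have hh2 := mul_le_mul_of_nonneg_left hdist (mul_nonneg hK0 hdn0)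
          nlinarith
        have h5 : K * ‖d‖ * (2 * δ₂) ≤ K * ‖d‖ * (2 * (ρ / (4 * (K * ‖d‖ + 1)))) := by
          apply mul_le_mul_of_nonneg_left (by linarith) (by positivity)
        have h6 : K * ‖d‖ * (2 * (ρ / (4 * (K * ‖d‖ + 1)))) ≤ ρ/2 := by
          have ha : 0 ≤ K * ‖d‖ := mul_nonneg hK0 hdn0
          have heq : K * ‖d‖ * (2 * (ρ / (4 * (K * ‖d‖ + 1))))
              = (K * ‖d‖ / (K * ‖d‖ + 1)) * (ρ/2) := by
            field_simp
            ring
          have hle1 : K * ‖d‖ / (K * ‖d‖ + 1) ≤ 1 := by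
            rw [div_le_one (by linarith)]
            linarith
          rw [heq]
          calc (K * ‖d‖ / (K * ‖d‖ + 1)) * (ρ/2) ≤ 1 * (ρ/2) :=
                mul_le_mul_of_nonneg_right hle1 (by positivity)
          _ = ρ/2 := one_mul _
        linarith
      calc dist (y₂ + s • d) yb ≤ dist (y₂ + s • d) y₂ + dist y₂ yb := dist_triangle _ _ _
      _ < ρ/2 + ρ/2 := by
          apply add_lt_add_of_le_of_lt _ h3
          rw [dist_eq_norm]
          simpa [hnorm] using hsb
      _ = ρ := by ring
  -- feasibility transfer
  have key : ∀ (x₁ x₂ : Vec n) (y₂ : Vec m), dist x₁ xb < δ₂ → dist x₂ xb < δ₂ →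
      dist y₂ yb < ρ/2 → (∀ i, g x₂ y₂ i ≤ 0) →
      ∀ i, g x₁ (y₂ + (K * dist x₁ x₂) • d) i ≤ 0 := by
    intro x₁ x₂ y₂ h1 h2 h3 hfeas i
    set t : ℝ := K * dist x₁ x₂ with htdef
    have ht0 : 0 ≤ t := mul_nonneg hK0 dist_nonneg
    by_cases hi : g xb yb i = 0
    · -- active constraint: use descent direction
      have hmvt : g x₁ (y₂ + t • d) i ≤ g x₁ (y₂ + (0:ℝ) • d) i - (c/2) * t := by
        apply onesided_mvt ht0 (fun s hs => curve_hasDerivAt g hg x₁ y₂ d i s)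
        intro s hs
        have hmem := hseg x₁ x₂ y₂ h1 h2 h3 s hs
        have := ((hball hmem).2 i).1 hi
        simp only [hPdef] at this
        linarith
      have h4 : g x₁ y₂ i - g x₂ y₂ i ≤ (Lg : ℝ) * dist x₁ x₂ := by
        have hm1 : ((x₁, y₂) : Vec n × Vec m) ∈ Tg := by
          apply (hball _).1.1
          apply hmemball _ _ (lt_of_lt_of_le h1 (le_trans (min_le_right _ _) (min_le_left _ _)))
          linarith
        have hm2 : ((x₂, y₂) : Vec n × Vec m) ∈ Tg := by
          apply (hball _).1.1
          apply hmemball _ _ (lt_of_lt_of_le h2 (le_trans (min_le_right _ _) (min_le_left _ _)))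
          linarith
        have h5 := hGlip.dist_le_mul _ hm1 _ hm2
        have h6 : dist (G (x₁, y₂) i) (G (x₂, y₂) i) ≤ dist (G (x₁, y₂)) (G (x₂, y₂)) :=
          dist_le_pi_dist _ _ i
        have h7 : dist ((x₁, y₂) : Vec n × Vec m) (x₂, y₂) = dist x₁ x₂ := by
          rw [Prod.dist_eq]
          simp [max_eq_left dist_nonneg]
        rw [h7] at h5
        have h8 : g x₁ y₂ i - g x₂ y₂ i ≤ |g x₁ y₂ i - g x₂ y₂ i| := le_abs_self _
        have h9 : |g x₁ y₂ i - g x₂ y₂ i| = dist (G (x₁, y₂) i) (G (x₂, y₂) i) := by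
          rw [Real.dist_eq]
        linarith
      have hct : (c/2) * t = (Lg : ℝ) * dist x₁ x₂ := by
        have hc' : c ≠ 0 := ne_of_gt hc
        rw [htdef, hKdef]
        field_simp
      have : g x₁ (y₂ + (0:ℝ) • d) i = g x₁ y₂ i := by norm_num
      rw [this] at hmvt
      have := hfeas i
      linarith
    · -- inactive constraint: stays negative
      have hmem := hseg x₁ x₂ y₂ h1 h2 h3 t ⟨ht0, le_rfl⟩
      have := ((hball hmem).2 i).2 hi
      simp only [hGdef] at this
      linarith
  -- the selector and ψ
  set ysel : Vec n → Vec m := fun x =>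
    if h : ∃ y ∈ Sset x, dist y yb < ρ/2 then h.choose else yb with hyseldef
  have hsel2 : ∀ x, dist x xb < δ₂ → ysel x ∈ Sset x ∧ dist (ysel x) yb < ρ/2 := by
    intro x hx
    have hex : ∃ y ∈ Sset x, dist y yb < ρ/2 :=
      hsel x (lt_of_lt_of_le hx (min_le_left _ _))
    simp only [hyseldef, dif_pos hex]
    exact ⟨hex.choose_spec.1, hex.choose_spec.2⟩
  set ψ : Vec n → ℝ := fun x => f x (ysel x) with hψdef
  set U : Set (Vec n) := Metric.ball xb δ₂ with hUdef
  -- one-sided Lipschitz estimate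
  set K' : ℝ := (Lf : ℝ) * (1 + K * ‖d‖) with hK'def
  have hK'0 : 0 ≤ K' := by positivity
  have honeside : ∀ x₁ ∈ U, ∀ x₂ ∈ U, ψ x₁ - ψ x₂ ≤ K' * dist x₁ x₂ := by
    intro x₁ hx₁ x₂ hx₂
    rw [hUdef, Metric.mem_ball] at hx₁ hx₂
    obtain ⟨hy₁S, hy₁d⟩ := hsel2 x₁ hx₁
    obtain ⟨hy₂S, hy₂d⟩ := hsel2 x₂ hx₂
    set t : ℝ := K * dist x₁ x₂ with htdef
    have ht0 : 0 ≤ t := mul_nonneg hK0 dist_nonneg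
    set z : Vec m := ysel x₂ + t • d with hzdef
    have hzfeas : ∀ i, g x₁ z i ≤ 0 := key x₁ x₂ (ysel x₂) hx₁ hx₂ hy₂d hy₂S.1
    have hstep1 : ψ x₁ ≤ f x₁ z := hy₁S.2 z hzfeas
    have hmemz : ((x₁, z) : Vec n × Vec m) ∈ Tf := by
      have := hseg x₁ x₂ (ysel x₂) hx₁ hx₂ hy₂d t ⟨ht0, le_rfl⟩
      exact (hball this).1.2
    have hmem2 : ((x₂, ysel x₂) : Vec n × Vec m) ∈ Tf := by
      apply (hball _).1.2
      apply hmemball _ _ (lt_of_lt_of_le hx₂ (le_trans (min_le_right _ _) (min_le_left _ _)))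
      linarith
    have hstep2 : f x₁ z - f x₂ (ysel x₂) ≤ (Lf : ℝ) * dist ((x₁, z) : Vec n × Vec m) (x₂, ysel x₂) := by
      have h5 := hFlip.dist_le_mul _ hmemz _ hmem2
      have h8 : f x₁ z - f x₂ (ysel x₂) ≤ |f x₁ z - f x₂ (ysel x₂)| := le_abs_self _
      have h9 : |f x₁ z - f x₂ (ysel x₂)| = dist (F (x₁, z)) (F (x₂, ysel x₂)) := by
        rw [Real.dist_eq]
      linarith
    have hdistz : dist ((x₁, z) : Vec n × Vec m) (x₂, ysel x₂) ≤ (1 + K * ‖d‖) * dist x₁ x₂ := by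
      rw [Prod.dist_eq]
      apply max_le
      · nlinarith [dist_nonneg (x := x₁) (y := x₂), mul_nonneg hK0 hdn0]
      · have heq : dist z (ysel x₂) = t * ‖d‖ := by
          rw [dist_eq_norm]
          have h1 : z - ysel x₂ = t • d := by rw [hzdef]; abel
          rw [h1, norm_smul, Real.norm_eq_abs, abs_of_nonneg ht0]
        rw [heq, htdef]
        nlinarith [dist_nonneg (x := x₁) (y := x₂), mul_nonneg hK0 hdn0]
    have hstep3 : (Lf : ℝ) * dist ((x₁, z) : Vec n × Vec m) (x₂, ysel x₂) ≤ K' * dist x₁ x₂ := by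
      rw [hK'def]
      calc (Lf : ℝ) * dist ((x₁, z) : Vec n × Vec m) (x₂, ysel x₂)
          ≤ (Lf : ℝ) * ((1 + K * ‖d‖) * dist x₁ x₂) :=
            mul_le_mul_of_nonneg_left hdistz Lf.coe_nonneg
      _ = (Lf : ℝ) * (1 + K * ‖d‖) * dist x₁ x₂ := by ring
    have hψ1 : ψ x₁ = f x₁ (ysel x₁) := rfl
    have hψ2 : ψ x₂ = f x₂ (ysel x₂) := rfl
    linarith
  -- assemble the answer
  refine ⟨Real.toNNReal K', U, ψ, Metric.ball_mem_nhds xb hδ₂, ?_, ?_⟩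
  · rw [lipschitzOnWith_iff_dist_le_mul]
    intro x₁ hx₁ x₂ hx₂
    have h1 := honeside x₁ hx₁ x₂ hx₂
    have h2 := honeside x₂ hx₂ x₁ hx₁
    rw [dist_comm x₂ x₁] at h2
    rw [Real.dist_eq, Real.coe_toNNReal K' hK'0, abs_le]
    constructor <;> linarith
  · intro x hx
    have hx' : dist x xb < δ₂ := by rwa [hUdef, Metric.mem_ball] at hx
    obtain ⟨hyS, _⟩ := hsel2 x hx'
    simp only [phi]
    apply le_antisymm
    · exact le_iInf₂ fun y hy => EReal.coe_le_coe_iff.2 (hyS.2 y hy)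
    · exact iInf₂_le (ysel x) hyS.1
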